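/- (Lemma 2.4, minimum version) Let x, y ∈ ℝⁿ with y strictly decreasing (y₁ > y₂ > ⋯ > yₙ), and suppose the coordinates of x take at least k distinct values, i.e. the set {x₁, …, xₙ} has cardinality ≥ k. Then the set I_m(x,y) = {P : P is an n×n permutation matrix and Σᵢ (Pᵀ *ᵥ x)ᵢ · yᵢ = m(x,y)} has cardinality at most (n−k+1)!. -/

import Mathlib

open Matrix BigOperators

/-- A matrix is doubly stochastic: nonnegative entries, row sums and column sums all 1. -/
def IsDoublyStochastic {n : ℕ} (A : Matrix (Fin n) (Fin n) ℝ) : Prop :=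
  (∀ i j, 0 ≤ A i j) ∧ (∀ i, ∑ j, A i j = 1) ∧ (∀ j, ∑ i, A i j = 1)

/-- `Maj x y` means `x ≺ y`: `x` is majorized by `y`. -/
def Maj {n : ℕ} (x y : Fin n → ℝ) : Prop :=
  ∃ A : Matrix (Fin n) (Fin n) ℝ, IsDoublyStochastic A ∧ x = A *ᵥ y

/-- `MajEq x y` means `x ∼ y`: mutual majorization. -/
def MajEq {n : ℕ} (x y : Fin n → ℝ) : Prop := Maj x y ∧ Maj y x

/-- `P` is a permutation matrix. -/
def IsPermMatrix {n : ℕ} (P : Matrix (Fin n) (Fin n) ℝ) : Prop :=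
  ∃ σ : Equiv.Perm (Fin n), P = σ.permMatrix ℝ

/-- The increasing rearrangement `x↑` of a vector. -/
noncomputable def incSort {n : ℕ} (x : Fin n → ℝ) : Fin n → ℝ := x ∘ Tuple.sort x

/-- The decreasing rearrangement `x↓` of a vector. -/
noncomputable def decSort {n : ℕ} (x : Fin n → ℝ) : Fin n → ℝ :=
  fun i => (x ∘ Tuple.sort x) i.rev

/-- Auxiliary factorial inequality: `m! * (c+1)! ≤ (m+c)!` for `m ≥ 1`. -/
lemma fact_mul_fact_le (m c : ℕ) (hm : 1 ≤ m) :
    m.factorial * (c + 1).factorial ≤ (m + c).factorial := by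
  induction m with
  | zero => omega
  | succ m ih =>
    rcases Nat.eq_zero_or_pos m with hm0 | hm0
    · subst hm0
      have h0 : 0 + 1 + c = c + 1 := by omega
      rw [h0]
      simp [Nat.factorial_succ]
    · have h1 := ih hm0
      have : (m + 1).factorial * (c + 1).factorial
          = (m + 1) * (m.factorial * (c + 1).factorial) := by
        rw [Nat.factorial_succ]; ring
      rw [this]
      calc (m + 1) * (m.factorial * (c + 1).factorial)
          ≤ (m + 1) * (m + c).factorial := Nat.mul_le_mul_left _ h1
        _ ≤ (m + c + 1) * (m + c).factorial := by
            exact Nat.mul_le_mul_right _ (by omega)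
        _ = (m + 1 + c).factorial := by
            rw [← Nat.factorial_succ]; ring_nf

/-- Cardinality of the stabilizer of a function with at least `k` distinct values. -/
lemma stab_card_le (k : ℕ) {α : Type} [inst1 : Fintype α] [inst2 : DecidableEq α]
    (u : α → ℝ) (hu : k ≤ (Finset.univ.image u).card) :
    Nat.card {π : Equiv.Perm α // u ∘ π = u} ≤ (Fintype.card α - k + 1).factorial := by
  induction k generalizing α inst1 inst2 u with
  | zero =>
    have h1 : Nat.card {π : Equiv.Perm α // u ∘ π = u} ≤ Nat.card (Equiv.Perm α) :=
      Nat.card_le_card_of_injective _ Subtype.val_injective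
    have h2 : Nat.card (Equiv.Perm α) = (Fintype.card α).factorial := by
      rw [Nat.card_eq_fintype_card, Fintype.card_perm]
    calc Nat.card {π : Equiv.Perm α // u ∘ π = u}
        ≤ (Fintype.card α).factorial := by rw [← h2]; exact h1
      _ ≤ (Fintype.card α - 0 + 1).factorial :=
          Nat.factorial_le (by omega)
  | succ k ih =>
    -- pick a value v in the image
    have hne : (Finset.univ.image u).Nonempty := by
      apply Finset.card_pos.mp; omega
    obtain ⟨v, hv⟩ := hne
    obtain ⟨a, -, ha⟩ := Finset.mem_image.mp hv
    -- the two subtypes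
    set F := {i : α // u i = v} with hF
    set S := {i : α // ¬ u i = v} with hS
    let u' : S → ℝ := fun i => u i.val
    -- the injection
    have key : ∀ π : {π : Equiv.Perm α // u ∘ π = u}, ∀ i : α, u (π.val i) = u i :=
      fun π i => congrFun π.2 i
    let Φ : {π : Equiv.Perm α // u ∘ π = u} →
        Equiv.Perm F × {π' : Equiv.Perm S // u' ∘ π' = u'} := fun π =>
      ⟨π.val.subtypePerm (fun i => by rw [key π i]),
       ⟨π.val.subtypePerm (fun i => by rw [key π i]),
        funext fun i => by simp only [Function.comp_apply, Equiv.Perm.subtypePerm_apply, u']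
                           exact key π i.val⟩⟩
    have hΦ : Function.Injective Φ := by
      intro π₁ π₂ h
      have h1 := congrArg Prod.fst h
      have h2 := congrArg (fun z => (Prod.snd z).val) h
      apply Subtype.ext; apply Equiv.ext; intro i
      by_cases hi : u i = v
      · have := congrArg (fun e => (e ⟨i, hi⟩ : F).val) h1
        exact this
      · have := congrArg (fun e => (e ⟨i, hi⟩ : S).val) h2
        exact this
    have hcard : Nat.card {π : Equiv.Perm α // u ∘ π = u}
        ≤ Nat.card (Equiv.Perm F) * Nat.card {π' : Equiv.Perm S // u' ∘ π' = u'} := by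
      have := Nat.card_le_card_of_injective Φ hΦ
      rwa [Nat.card_prod] at this
    -- counting
    set m := Fintype.card F with hm
    have hm1 : 1 ≤ m := Fintype.card_pos_iff.mpr ⟨⟨a, ha⟩⟩
    have hmn : m ≤ Fintype.card α := Fintype.card_subtype_le _
    have hScard : Fintype.card S = Fintype.card α - m := by
      exact Fintype.card_subtype_compl (fun i => u i = v)
    -- image of u' has at least k values
    have himage : k ≤ (Finset.univ.image u').card := by
      have hsub : (Finset.univ.image u).erase v ⊆ Finset.univ.image u' := by
        intro w hw
        obtain ⟨hwv, hw'⟩ := Finset.mem_erase.mp hw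
        obtain ⟨i, -, hi⟩ := Finset.mem_image.mp hw'
        exact Finset.mem_image.mpr ⟨⟨i, by rw [hi]; exact hwv⟩, Finset.mem_univ _, hi⟩
      have := Finset.card_le_card hsub
      rw [Finset.card_erase_of_mem hv] at this
      omega
    have hk_le : k ≤ Fintype.card α - m := by
      calc k ≤ (Finset.univ.image u').card := himage
        _ ≤ Fintype.card S := by
            simpa using Finset.card_image_le (s := (Finset.univ : Finset S)) (f := u')
        _ = Fintype.card α - m := hScard
    have hperm : Nat.card (Equiv.Perm F) = m.factorial := by
      rw [Nat.card_eq_fintype_card, Fintype.card_perm, hm]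
    have hstab' := ih u' himage
    rw [hScard] at hstab'
    have harith : m.factorial * (Fintype.card α - m - k + 1).factorial
        ≤ (Fintype.card α - (k + 1) + 1).factorial := by
      have h1 : Fintype.card α - m - k + 1 = (Fintype.card α - m - k) + 1 := rfl
      have h2 : Fintype.card α - (k + 1) + 1 = m + (Fintype.card α - m - k) := by omega
      rw [h1, h2]
      exact fact_mul_fact_le m _ hm1
    calc Nat.card {π : Equiv.Perm α // u ∘ π = u}
        ≤ Nat.card (Equiv.Perm F) * Nat.card {π' : Equiv.Perm S // u' ∘ π' = u'} := hcard
      _ ≤ m.factorial * (Fintype.card α - m - k + 1).factorial := by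
          rw [hperm]; exact Nat.mul_le_mul_left _ hstab'
      _ ≤ (Fintype.card α - (k + 1) + 1).factorial := harith

/-- Lemma 2.4, minimum version: if `x` has at least `k` distinct
coordinate values and `y` is strictly decreasing, then
`|I_m(x,y)| ≤ (n - k + 1)!`. -/
theorem card_Im_le {n k : ℕ} (x y : Fin n → ℝ) (hy : StrictAnti y)
    (hx : k ≤ (Finset.univ.image x).card) :
    {P : Matrix (Fin n) (Fin n) ℝ | IsPermMatrix P ∧
      ∑ i, (Pᵀ *ᵥ x) i * y i = ∑ i, incSort x i * decSort y i}.ncard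
      ≤ (n - k + 1).factorial := by
  classical
  set s : Equiv.Perm (Fin n) := Tuple.sort x with hs
  set u : Fin n → ℝ := incSort x with hu
  have hu_def : ∀ i, u i = x (s i) := fun i => rfl
  have hu_mono : Monotone u := Tuple.monotone_sort x
  -- decSort y = y
  have hdec : decSort y = y := by
    have hrevmono : Monotone (y ∘ (Fin.revPerm : Equiv.Perm (Fin n))) := by
      intro i j hij
      exact hy.antitone (by simpa using Fin.rev_le_rev.mpr hij)
    have hsorty : y ∘ (Fin.revPerm : Equiv.Perm (Fin n)) = y ∘ Tuple.sort y :=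
      Tuple.comp_sort_eq_comp_iff_monotone.mpr hrevmono
    funext i
    show (y ∘ Tuple.sort y) i.rev = y i
    rw [← hsorty]
    simp [Function.comp]
  rw [hdec]
  have hAnti : Antivary u y := by
    intro i j hij
    exact hu_mono (le_of_lt (hy.lt_iff_gt.mp hij))
  -- the set of minimizing permutations
  set T : Set (Equiv.Perm (Fin n)) :=
    {σ | ∑ i, x i * y (σ i) = ∑ i, u i * y i} with hT
  -- the stabilizer set
  set Stab : Set (Equiv.Perm (Fin n)) := {π | u ∘ π = u} with hStab
  -- step 1 : matrix set is contained in the image of T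
  have hsub1 : {P : Matrix (Fin n) (Fin n) ℝ | IsPermMatrix P ∧
      ∑ i, (Pᵀ *ᵥ x) i * y i = ∑ i, u i * y i}
      ⊆ (fun σ : Equiv.Perm (Fin n) => σ.permMatrix ℝ) '' T := by
    rintro P ⟨⟨σ, rfl⟩, hsum⟩
    refine ⟨σ, ?_, rfl⟩
    have hmv : ∀ i, ((σ.permMatrix ℝ)ᵀ *ᵥ x) i = x (σ.symm i) := by
      intro i
      show (∑ j, (σ.permMatrix ℝ)ᵀ i j * x j) = x (σ.symm i)
      have : ∀ j, (σ.permMatrix ℝ)ᵀ i j * x j = if j = σ.symm i then x j else 0 := by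
        intro j
        rw [Matrix.transpose_apply]
        show (σ.toPEquiv.toMatrix : Matrix (Fin n) (Fin n) ℝ) j i * x j = _
        rw [PEquiv.toMatrix_toPEquiv_eq, Matrix.submatrix_apply, id_eq, Matrix.one_apply]
        by_cases h : σ j = i
        · rw [if_pos h, if_pos (by rw [← h]; simp), one_mul]
        · rw [if_neg h, if_neg (by intro hji; apply h; rw [hji]; simp), zero_mul]
      rw [Finset.sum_congr rfl (fun j _ => this j)]
      simp
    have hre : ∑ i, ((σ.permMatrix ℝ)ᵀ *ᵥ x) i * y i = ∑ i, x i * y (σ i) := by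
      rw [Finset.sum_congr rfl (fun i _ => by rw [hmv i])]
      have := Equiv.sum_comp σ (fun i => x (σ.symm i) * y i)
      rw [← this]
      simp
    show ∑ i, x i * y (σ i) = ∑ i, u i * y i
    rw [← hre, hsum]
  -- step 2 : T injects into Stab via σ ↦ s.trans σ
  have hsub2 : (fun σ : Equiv.Perm (Fin n) => s.trans σ) '' T ⊆ Stab := by
    rintro τ ⟨σ, hσ, rfl⟩
    set τ : Equiv.Perm (Fin n) := s.trans σ with hτ
    have hre : ∑ i, u i * y (τ i) = ∑ i, x i * y (σ i) := by
      have := Equiv.sum_comp s (fun i => x i * y (σ i))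
      rw [← this]
      rfl
    have heq : ∑ i, u i * y (τ i) = ∑ i, u i * y i := by
      rw [hre, hσ]
    have hAnti2 : Antivary u (y ∘ τ) :=
      (hAnti.sum_mul_eq_sum_mul_comp_perm_iff).mp heq
    -- u ∘ τ.symm is monotone
    have hmono : Monotone (u ∘ τ.symm) := by
      intro i j hij
      rcases eq_or_lt_of_le hij with h | h
      · rw [h]
      · have hyy : (y ∘ τ) (τ.symm j) < (y ∘ τ) (τ.symm i) := by
          simp only [Function.comp_apply, Equiv.apply_symm_apply]
          exact hy h
        exact hAnti2 hyy
    have huτ : u ∘ τ.symm = u := by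
      have h1 : u ∘ ⇑(Equiv.refl (Fin n)) = u := by rfl
      have := Tuple.unique_monotone (f := u) (σ := τ.symm) (τ := Equiv.refl (Fin n))
        hmono (by rw [h1]; exact hu_mono)
      rw [h1] at this
      exact this
    show u ∘ τ = u
    funext i
    have h2 := congrFun huτ (τ i)
    simp only [Function.comp_apply, Equiv.symm_apply_apply] at h2
    exact h2.symm
  -- now chain cardinalities
  have hT_fin : T.Finite := Set.toFinite _
  have hStab_fin : Stab.Finite := Set.toFinite _
  have hinj : Function.Injective (fun σ : Equiv.Perm (Fin n) => s.trans σ) := by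
    intro σ₁ σ₂ h
    apply Equiv.ext; intro i
    have := congrFun (congrArg (fun e : Equiv.Perm (Fin n) => (e : Fin n → Fin n)) h)
      (s.symm i)
    simpa using this
  have hc1 : {P : Matrix (Fin n) (Fin n) ℝ | IsPermMatrix P ∧
      ∑ i, (Pᵀ *ᵥ x) i * y i = ∑ i, u i * y i}.ncard ≤ T.ncard := by
    calc {P : Matrix (Fin n) (Fin n) ℝ | IsPermMatrix P ∧
        ∑ i, (Pᵀ *ᵥ x) i * y i = ∑ i, u i * y i}.ncard
        ≤ ((fun σ : Equiv.Perm (Fin n) => σ.permMatrix ℝ) '' T).ncard :=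
          Set.ncard_le_ncard hsub1 (hT_fin.image _)
      _ ≤ T.ncard := Set.ncard_image_le hT_fin
  have hc2 : T.ncard ≤ Stab.ncard := by
    calc T.ncard = ((fun σ : Equiv.Perm (Fin n) => s.trans σ) '' T).ncard :=
          (Set.ncard_image_of_injective T hinj).symm
      _ ≤ Stab.ncard := Set.ncard_le_ncard hsub2 hStab_fin
  -- stabilizer bound
  have himg : (Finset.univ.image u).card = (Finset.univ.image x).card := by
    congr 1
    ext w
    simp only [Finset.mem_image, Finset.mem_univ, true_and]
    constructor
    · rintro ⟨i, hi⟩; exact ⟨s i, hi⟩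
    · rintro ⟨i, hi⟩; exact ⟨s.symm i, by rw [hu_def]; simp [hi]⟩
  have hc3 : Stab.ncard ≤ (n - k + 1).factorial := by
    have := stab_card_le k u (by rw [himg]; exact hx)
    rw [Fintype.card_fin] at this
    calc Stab.ncard = Nat.card Stab := (Nat.card_coe_set_eq _).symm
      _ ≤ (n - k + 1).factorial := this
  exact le_trans hc1 (le_trans hc2 hc3)
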